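/- Let ρ be a 2×2 complex positive semidefinite matrix with trace 1 (a qubit density matrix). Then (Re Tr[ρ(σz + σx)])² + (Re Tr[ρ(σz - σx)])² ≤ 2. -/

import Mathlib

open Matrix ComplexOrder

noncomputable def σx : Matrix (Fin 2) (Fin 2) ℂ := !![0, 1; 1, 0]
noncomputable def σz : Matrix (Fin 2) (Fin 2) ℂ := !![1, 0; 0, -1]

theorem stmt_4 (ρ : Matrix (Fin 2) (Fin 2) ℂ)
    (hρ : ρ.PosSemidef) (htr : ρ.trace = 1) :
    ((ρ * (σz + σx)).trace.re) ^ 2 + ((ρ * (σz - σx)).trace.re) ^ 2 ≤ 2 := by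
  have hherm := hρ.1
  have h00i : (ρ 0 0).im = 0 := by
    have := congrFun (congrFun hherm 0) 0
    simp [Matrix.conjTranspose_apply, Complex.ext_iff] at this
    linarith [this]
  have h11i : (ρ 1 1).im = 0 := by
    have := congrFun (congrFun hherm 1) 1
    simp [Matrix.conjTranspose_apply, Complex.ext_iff] at this
    linarith [this]
  have h10 : ρ 1 0 = starRingEnd ℂ (ρ 0 1) := by
    have := congrFun (congrFun hherm 0) 1
    simpa [Matrix.conjTranspose_apply] using congrArg (starRingEnd ℂ) this
  have h00 : 0 ≤ (ρ 0 0).re := by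
    have := hρ.dotProduct_mulVec_nonneg (fun i => if i = 0 then 1 else 0)
    simpa [dotProduct, Matrix.mulVec, Fin.sum_univ_two, Complex.le_def] using this.1
  have h11 : 0 ≤ (ρ 1 1).re := by
    have := hρ.dotProduct_mulVec_nonneg (fun i => if i = 1 then 1 else 0)
    simpa [dotProduct, Matrix.mulVec, Fin.sum_univ_two, Complex.le_def] using this.1
  have hdet : 0 ≤ ρ.det := by
    rw [hherm.det_eq_prod_eigenvalues]
    have : (0:ℝ) ≤ ∏ i, hherm.eigenvalues i :=
      Finset.prod_nonneg fun i _ => hρ.eigenvalues_nonneg i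
    rw [Complex.le_def]
    simpa using this
  have hdet' : 0 ≤ (ρ 0 0).re * (ρ 1 1).re - ((ρ 0 1).re ^ 2 + (ρ 0 1).im ^ 2) := by
    rw [Complex.le_def, Matrix.det_fin_two, h10] at hdet
    simp [Complex.ext_iff, h00i, h11i] at hdet
    nlinarith [hdet.1]
  have htr' : (ρ 0 0).re + (ρ 1 1).re = 1 := by
    have := congrArg Complex.re htr
    simpa [Matrix.trace_fin_two] using this
  have e1 : ((ρ * (σz + σx)).trace.re) = (ρ 0 0).re - (ρ 1 1).re + ((ρ 0 1).re + (ρ 1 0).re) := by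
    simp [σx, σz, Matrix.trace_fin_two, Matrix.mul_apply, Fin.sum_univ_two]
    ring
  have e2 : ((ρ * (σz - σx)).trace.re) = (ρ 0 0).re - (ρ 1 1).re - ((ρ 0 1).re + (ρ 1 0).re) := by
    simp [σx, σz, Matrix.trace_fin_two, Matrix.mul_apply, Fin.sum_univ_two]
    ring
  have h10r : (ρ 1 0).re = (ρ 0 1).re := by rw [h10]; simp
  rw [e1, e2, h10r]
  nlinarith [sq_nonneg ((ρ 0 1).im), sq_nonneg ((ρ 0 0).re - (ρ 1 1).re)]
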